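/- Let k ≥ 3, let P ⊆ S² be a set of k points in general position, P̂ = P ∪ (−P), let p ∈ P, and let H = { cos(t)·p + sin(t)·v : t ∈ [0,π] } be a half-circle with endpoints p and −p such that its great circle span{p,v} ∩ S² meets P̂ only in {p, −p}. Then the number of edges {a,b} of P̂ with a, b ∉ {p, −p} such that arc(a,b) ∩ H ≠ ∅ equals (1/2)·(k−1)(k−2). -/

import Mathlib

open Set
open scoped RealInnerProductSpace

noncomputable section

/-- Three-dimensional Euclidean space. -/
abbrev E3 : Type := EuclideanSpace ℝ (Fin 3)

/-- The unit sphere `S²` in `ℝ³`. -/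
def unitSphere : Set E3 := {x | ‖x‖ = 1}

/-- The geodesic arc from `p` to `q`: the radial projection onto the sphere of the
straight segment from `p` to `q`. -/
def arc (p q : E3) : Set E3 :=
  {x | ∃ t ∈ Icc (0 : ℝ) 1, x = ‖(1 - t) • p + t • q‖⁻¹ • ((1 - t) • p + t • q)}

/-- The half-circle with endpoints `p` and `-p` determined by a direction `v`. -/
def halfCircle (p v : E3) : Set E3 :=
  {x | ∃ t ∈ Icc (0 : ℝ) Real.pi, x = Real.cos t • p + Real.sin t • v}

/-- A set of points is in general position if every three distinct points of it are
linearly independent. -/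
def GenPos (P : Set E3) : Prop :=
  ∀ a ∈ P, ∀ b ∈ P, ∀ c ∈ P, a ≠ b → a ≠ c → b ≠ c → LinearIndependent ℝ ![a, b, c]

/-- `P̂ = P ∪ (-P)`: the set `P` together with the antipodes of its points. -/
def phat (P : Set E3) : Set E3 := P ∪ (fun x => -x) '' P

/-- The edges of a vertex set `V`: unordered pairs `{a, b}` of points of `V`
with `b ∉ {a, -a}`. -/
def edges (V : Set E3) : Set (Sym2 E3) :=
  {e | ∃ a b, a ∈ V ∧ b ∈ V ∧ b ≠ a ∧ b ≠ -a ∧ e = s(a, b)}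

/-- A curve of a drawing: a subset of the sphere together with its set of endpoints. -/
abbrev Curve : Type := Set E3 × Set E3

/-- The curves of the drawing determined by `P`: the geodesic arcs `arc a b` for all
edges `{a, b}` of `P̂`, together with the half-circles `halfCircle p (v p)` joining
`p` and `-p` for `p ∈ P'`. -/
def drawingCurves (P : Set E3) (v : E3 → E3) (P' : Set E3) : Set Curve :=
  {c | (∃ a b, a ∈ phat P ∧ b ∈ phat P ∧ b ≠ a ∧ b ≠ -a ∧
          c = (arc a b, ({a, b} : Set E3))) ∨
       (∃ p ∈ P', c = (halfCircle p (v p), ({p, -p} : Set E3)))}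

/-- The crossing pairs of a drawing: unordered pairs of distinct curves sharing a point
that is not an endpoint of either curve. -/
def crossingPairs (D : Set Curve) : Set (Sym2 Curve) :=
  {pr | ∃ c ∈ D, ∃ d ∈ D, c ≠ d ∧
    (∃ x, x ∈ c.1 ∧ x ∈ d.1 ∧ x ∉ c.2 ∧ x ∉ d.2) ∧ pr = s(c, d)}

/-- Hill's number `H(n)` as a rational number. -/
def Hfun (n : ℕ) : ℚ :=
  (1 / 4 : ℚ) * ((n / 2 : ℕ) : ℚ) * (((n - 1) / 2 : ℕ) : ℚ) *
    (((n - 2) / 2 : ℕ) : ℚ) * (((n - 3) / 2 : ℕ) : ℚ)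


set_option maxHeartbeats 1000000

lemma indep_pair {p v : E3} (hp : ‖p‖ = 1) (hv : ‖v‖ = 1) (hpv : ⟪p, v⟫ = 0) :
    LinearIndependent ℝ ![p, v] := by
  rw [Fintype.linearIndependent_iff]
  intro g hg
  have h0 : ⟪p, g 0 • p + g 1 • v⟫ = g 0 := by
    rw [inner_add_right, real_inner_smul_right, real_inner_smul_right, hpv,
      real_inner_self_eq_norm_sq, hp]; ring
  have h1 : ⟪v, g 0 • p + g 1 • v⟫ = g 1 := by
    rw [inner_add_right, real_inner_smul_right, real_inner_smul_right]
    have hvp : ⟪v, p⟫ = (0:ℝ) := by rw [real_inner_comm]; exact hpv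
    rw [hvp, real_inner_self_eq_norm_sq, hv]
    ring
  have hs : g 0 • p + g 1 • v = 0 := by
    have := hg; simpa [Fin.sum_univ_two] using this
  have hg0 : g 0 = 0 := by rw [← h0, hs, inner_zero_right]
  have hg1 : g 1 = 0 := by rw [← h1, hs, inner_zero_right]
  intro i
  fin_cases i
  · exact hg0
  · exact hg1

lemma exists_normal {p v : E3} (hp : ‖p‖ = 1) (hv : ‖v‖ = 1) (hpv : ⟪p, v⟫ = 0) :
    ∃ n : E3, ∀ x : E3, ⟪n, x⟫ = 0 ↔ x ∈ Submodule.span ℝ {p, v} := by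
  set S := Submodule.span ℝ ({p, v} : Set E3) with hS
  have hrange : (Set.range ![p, v]) = ({p, v} : Set E3) := by
    simp [Matrix.range_cons, Matrix.range_empty]
    exact Set.pair_comm v p
  have hfr : Module.finrank ℝ S = 2 := by
    have := finrank_span_eq_card (R := ℝ) (indep_pair hp hv hpv)
    rw [hrange] at this
    simpa using this
  have hE : Module.finrank ℝ E3 = 3 := by simp
  have hK : Module.finrank ℝ Sᗮ = 1 := by
    have := Submodule.finrank_add_finrank_orthogonal (𝕜 := ℝ) S
    omega
  have hKbot : Sᗮ ≠ ⊥ := by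
    intro h; rw [h] at hK; simp at hK
  obtain ⟨n, hnK, hn0⟩ := Submodule.exists_mem_ne_zero_of_ne_bot hKbot
  have hspan : Submodule.span ℝ {n} = Sᗮ := by
    apply Submodule.eq_of_le_of_finrank_eq
    · rw [Submodule.span_singleton_le_iff_mem]; exact hnK
    · rw [hK, finrank_span_singleton hn0]
  refine ⟨n, fun x => ⟨fun hx => ?_, fun hx => ?_⟩⟩
  · obtain ⟨y, hy, z, hz, hxyz⟩ := (Submodule.exists_add_mem_mem_orthogonal x : ∃ y ∈ S, ∃ z ∈ Sᗮ, x = y + z)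
    rw [← hspan, Submodule.mem_span_singleton] at hz
    obtain ⟨c, rfl⟩ := hz
    have hny : ⟪n, y⟫ = 0 := by
      rw [real_inner_comm]
      exact (Submodule.mem_orthogonal S n).mp hnK y hy
    have : ⟪n, x⟫ = c * ‖n‖ ^ 2 := by
      rw [hxyz, inner_add_right, hny, real_inner_smul_right, real_inner_self_eq_norm_sq]
      ring
    rw [hx] at this
    have hc : c = 0 := by
      have hn' : ‖n‖ ≠ 0 := norm_ne_zero_iff.mpr hn0
      have := this.symm
      rcases mul_eq_zero.mp this with h | h
      · exact h
      · exact absurd (pow_eq_zero_iff (by norm_num) |>.mp h) hn'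
    rw [hxyz, hc]; simpa using hy
  · rw [real_inner_comm]
    exact (Submodule.mem_orthogonal S n).mp hnK x hx

lemma norm_combo {p v : E3} (hp : ‖p‖ = 1) (hv : ‖v‖ = 1) (hpv : ⟪p, v⟫ = 0)
    (a b : ℝ) : ‖a • p + b • v‖ ^ 2 = a ^ 2 + b ^ 2 := by
  have hvp : ⟪v, p⟫ = (0:ℝ) := by rw [real_inner_comm]; exact hpv
  rw [← real_inner_self_eq_norm_sq]
  simp only [inner_add_left, inner_add_right, real_inner_smul_left, real_inner_smul_right]
  rw [hpv, hvp, real_inner_self_eq_norm_sq, real_inner_self_eq_norm_sq, hp, hv]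
  ring

lemma mem_halfCircle_iff {p v : E3} (hp : ‖p‖ = 1) (hv : ‖v‖ = 1) (hpv : ⟪p, v⟫ = 0)
    (x : E3) :
    x ∈ halfCircle p v ↔ ‖x‖ = 1 ∧ x ∈ Submodule.span ℝ ({p, v} : Set E3) ∧ 0 ≤ ⟪v, x⟫ := by
  have hvp : ⟪v, p⟫ = (0:ℝ) := by rw [real_inner_comm]; exact hpv
  constructor
  · rintro ⟨t, ⟨ht0, htpi⟩, rfl⟩
    refine ⟨?_, ?_, ?_⟩
    · have := norm_combo hp hv hpv (Real.cos t) (Real.sin t)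
      have h1 : Real.cos t ^ 2 + Real.sin t ^ 2 = 1 := by
        rw [add_comm]; exact Real.sin_sq_add_cos_sq t
      nlinarith [norm_nonneg (Real.cos t • p + Real.sin t • v)]
    · exact Submodule.add_mem _
        (Submodule.smul_mem _ _ (Submodule.subset_span (by simp)))
        (Submodule.smul_mem _ _ (Submodule.subset_span (by simp)))
    · rw [inner_add_right, real_inner_smul_right, real_inner_smul_right, hvp,
        real_inner_self_eq_norm_sq, hv]
      have := Real.sin_nonneg_of_nonneg_of_le_pi ht0 htpi
      nlinarith
  · rintro ⟨hx1, hxs, hxv⟩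
    obtain ⟨α, β, rfl⟩ := Submodule.mem_span_pair.mp hxs
    have hβ : ⟪v, α • p + β • v⟫ = β := by
      rw [inner_add_right, real_inner_smul_right, real_inner_smul_right, hvp,
        real_inner_self_eq_norm_sq, hv]; ring
    have hαβ : α ^ 2 + β ^ 2 = 1 := by
      have := norm_combo hp hv hpv α β
      rw [hx1] at this; linarith [this.symm]
    have hβ0 : 0 ≤ β := by rw [hβ] at hxv; exact hxv
    have hα1 : -1 ≤ α ∧ α ≤ 1 := by constructor <;> nlinarith
    refine ⟨Real.arccos α, ⟨Real.arccos_nonneg α, Real.arccos_le_pi α⟩, ?_⟩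
    rw [Real.cos_arccos hα1.1 hα1.2, Real.sin_arccos]
    have : Real.sqrt (1 - α ^ 2) = β := by
      rw [show 1 - α ^ 2 = β ^ 2 by linarith]
      exact Real.sqrt_sq hβ0
    rw [this]

lemma vw_ne_zero {p v n a b : E3}
    (hp : ‖p‖ = 1) (hv : ‖v‖ = 1) (hpv : ⟪p, v⟫ = 0)
    (hn : ∀ x : E3, ⟪n, x⟫ = 0 ↔ x ∈ Submodule.span ℝ ({p, v} : Set E3))
    (hind : ∀ s t : ℝ, s • a + t • b = 0 → s = 0 ∧ t = 0)
    (hpab : ∀ s t : ℝ, p ≠ s • a + t • b)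
    (s t : ℝ) (hst : ¬(s = 0 ∧ t = 0)) (h0 : ⟪n, s • a + t • b⟫ = 0) :
    ⟪v, s • a + t • b⟫ ≠ 0 := by
  intro hv0
  set u : E3 := s • a + t • b with hu
  have hu0 : u ≠ 0 := fun h => hst (hind s t h)
  have hnu : ‖u‖ ≠ 0 := norm_ne_zero_iff.mpr hu0
  set x : E3 := ‖u‖⁻¹ • u with hx
  have hx1 : ‖x‖ = 1 := norm_smul_inv_norm hu0
  have hnx : ⟪n, x⟫ = 0 := by
    rw [hx, real_inner_smul_right, h0, mul_zero]
  obtain ⟨α, β, hαβ⟩ := Submodule.mem_span_pair.mp ((hn x).mp hnx)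
  have hβ : ⟪v, x⟫ = β := by
    have hvp : ⟪v, p⟫ = (0:ℝ) := by rw [real_inner_comm]; exact hpv
    rw [← hαβ, inner_add_right, real_inner_smul_right, real_inner_smul_right, hvp,
      real_inner_self_eq_norm_sq, hv]; ring
  have hβ0 : β = 0 := by
    rw [← hβ, hx, real_inner_smul_right, hv0, mul_zero]
  have hxa : x = α • p := by rw [← hαβ, hβ0]; simp
  have hα : α ≠ 0 := by
    intro h
    rw [h, zero_smul] at hxa
    rw [hxa, norm_zero] at hx1
    norm_num at hx1
  have hpeq : p = (α⁻¹ * (‖u‖⁻¹ * s)) • a + (α⁻¹ * (‖u‖⁻¹ * t)) • b := by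
    have h1 : p = α⁻¹ • x := by rw [hxa, smul_smul, inv_mul_cancel₀ hα, one_smul]
    rw [h1, hx, hu, smul_add, smul_add, smul_smul, smul_smul, smul_smul, smul_smul]
    module
  exact hpab _ _ hpeq

lemma inner_n_w {n a b : E3} (hsign : ⟪n, a⟫ * ⟪n, b⟫ < 0) :
    ⟪n, |⟪n, b⟫| • a + |⟪n, a⟫| • b⟫ = 0 := by
  rw [inner_add_right, real_inner_smul_right, real_inner_smul_right]
  rcases lt_or_ge (⟪n, a⟫) 0 with h | h
  · have hb : 0 < ⟪n, b⟫ := by nlinarith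
    rw [abs_of_neg h, abs_of_pos hb]; ring
  · have ha : 0 < ⟪n, a⟫ := lt_of_le_of_ne h (by intro heq; rw [← heq] at hsign; simp at hsign)
    have hb : ⟪n, b⟫ < 0 := by nlinarith
    rw [abs_of_pos ha, abs_of_neg hb]; ring

lemma arc_meets_iff {p v n a b : E3}
    (hp : ‖p‖ = 1) (hv : ‖v‖ = 1) (hpv : ⟪p, v⟫ = 0)
    (hn : ∀ x : E3, ⟪n, x⟫ = 0 ↔ x ∈ Submodule.span ℝ ({p, v} : Set E3))
    (hind : ∀ s t : ℝ, s • a + t • b = 0 → s = 0 ∧ t = 0)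
    (hpab : ∀ s t : ℝ, p ≠ s • a + t • b)
    (hna : ⟪n, a⟫ ≠ 0) (hnb : ⟪n, b⟫ ≠ 0) :
    (arc a b ∩ halfCircle p v).Nonempty ↔
      (⟪n, a⟫ * ⟪n, b⟫ < 0 ∧ 0 < ⟪v, |⟪n, b⟫| • a + |⟪n, a⟫| • b⟫) := by
  set fa := ⟪n, a⟫ with hfa
  set fb := ⟪n, b⟫ with hfb
  set w : E3 := |fb| • a + |fa| • b with hw
  constructor
  · rintro ⟨x, ⟨t, ⟨ht0, ht1⟩, hxdef⟩, hxH⟩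
    obtain ⟨hx1, hxs, hxv⟩ := (mem_halfCircle_iff hp hv hpv x).mp hxH
    set u : E3 := (1 - t) • a + t • b with hu
    have hu0 : u ≠ 0 := by
      intro h
      obtain ⟨h1, h2⟩ := hind _ _ h
      rw [h2] at h1; norm_num at h1
    have hnu : ‖u‖ ≠ 0 := norm_ne_zero_iff.mpr hu0
    have hnux : ⟪n, x⟫ = 0 := (hn x).mpr hxs
    have hinu : ⟪n, u⟫ = 0 := by
      rw [hxdef, real_inner_smul_right] at hnux
      rcases mul_eq_zero.mp hnux with h | h
      · exact absurd h (inv_ne_zero hnu)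
      · exact h
    have heq : (1 - t) * fa + t * fb = 0 := by
      rw [hu, inner_add_right, real_inner_smul_right, real_inner_smul_right] at hinu
      exact hinu
    have ht0' : 0 < t := by
      rcases lt_or_eq_of_le ht0 with h | h
      · exact h
      · exfalso; rw [← h] at heq; simp at heq; exact hna heq
    have ht1' : t < 1 := by
      rcases lt_or_eq_of_le ht1 with h | h
      · exact h
      · exfalso; rw [h] at heq; simp at heq; exact hnb heq
    have hfb2 : 0 < fb * fb := mul_self_pos.mpr hnb
    have hsign : fa * fb < 0 := by
      have h2 : ((1 - t) * fa + t * fb) * fb = 0 := by rw [heq]; ring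
      nlinarith [h2, hfb2, ht0', ht1']
    refine ⟨hsign, ?_⟩
    -- u = c • w with c > 0
    have habs : (1 - t) * |fa| = t * |fb| := by
      have h' : |(1 - t) * fa| = |t * fb| := by
        rw [show (1 - t) * fa = -(t * fb) by linarith]; rw [abs_neg]
      rwa [abs_mul, abs_mul, abs_of_nonneg (by linarith : (0:ℝ) ≤ 1 - t),
        abs_of_nonneg ht0] at h'
    have hfa' : |fa| ≠ 0 := abs_ne_zero.mpr hna
    set c : ℝ := t / |fa| with hc
    have hcpos : 0 < c := div_pos ht0' (abs_pos.mpr hna)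
    have hc2 : c * |fa| = t := div_mul_cancel₀ t hfa'
    have hc1 : c * |fb| = 1 - t := by
      rw [hc]
      field_simp
      nlinarith [habs]
    have huw : u = c • w := by
      rw [hw, hu, smul_add, smul_smul, smul_smul, hc1, hc2]
    have hvw0 : ⟪v, w⟫ ≠ 0 := by
      have := vw_ne_zero hp hv hpv hn hind hpab (|fb|) (|fa|)
        (fun ⟨h1, _⟩ => hnb (abs_eq_zero.mp h1)) (inner_n_w hsign)
      exact this
    have hvx : 0 ≤ ⟪v, u⟫ := by
      rw [hxdef, real_inner_smul_right] at hxv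
      have hupos : 0 < ‖u‖⁻¹ := inv_pos.mpr (norm_pos_iff.mpr hu0)
      exact nonneg_of_mul_nonneg_right hxv hupos
    have hvuw : ⟪v, u⟫ = c * ⟪v, w⟫ := by rw [huw, real_inner_smul_right]
    rcases lt_or_ge 0 (⟪v, w⟫) with h | h
    · exact h
    · exfalso
      apply hvw0
      have h2 : c * ⟪v, w⟫ ≤ 0 := mul_nonpos_of_nonneg_of_nonpos hcpos.le h
      have h3 : (0:ℝ) ≤ c * ⟪v, w⟫ := hvuw ▸ hvx
      have h4 : c * ⟪v, w⟫ = 0 := le_antisymm h2 h3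
      rcases mul_eq_zero.mp h4 with h5 | h5
      · exact absurd h5 hcpos.ne'
      · exact h5
  · rintro ⟨hsign, hvw⟩
    have hw0 : w ≠ 0 := by
      intro h
      rw [h, inner_zero_right] at hvw
      exact lt_irrefl 0 hvw
    set d : ℝ := |fa| + |fb| with hd
    have hdpos : 0 < d := by
      have := abs_pos.mpr hna
      have := abs_nonneg fb
      linarith
    set t : ℝ := |fa| / d with ht
    have ht0 : 0 ≤ t := div_nonneg (abs_nonneg fa) hdpos.le
    have ht1 : t ≤ 1 := by
      rw [ht, div_le_one hdpos]
      have := abs_nonneg fb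
      linarith
    have h1t : 1 - t = |fb| / d := by
      rw [ht]; field_simp
      rw [hd]; ring
    set u : E3 := (1 - t) • a + t • b with hu
    have huw : u = d⁻¹ • w := by
      rw [hu, hw, smul_add, smul_smul, smul_smul, h1t, ht]
      rw [div_eq_inv_mul, div_eq_inv_mul]
    have hu0 : u ≠ 0 := by
      rw [huw]
      exact smul_ne_zero (inv_ne_zero hdpos.ne') hw0
    refine ⟨‖u‖⁻¹ • u, ⟨t, ⟨ht0, ht1⟩, rfl⟩, ?_⟩
    rw [mem_halfCircle_iff hp hv hpv]
    refine ⟨norm_smul_inv_norm hu0, ?_, ?_⟩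
    · apply (hn _).mp
      rw [real_inner_smul_right, huw, real_inner_smul_right, inner_n_w hsign, mul_zero, mul_zero]
    · rw [real_inner_smul_right, huw, real_inner_smul_right]
      have h1 : 0 ≤ ‖u‖⁻¹ := inv_nonneg.mpr (norm_nonneg u)
      have h2 : 0 ≤ d⁻¹ := inv_nonneg.mpr hdpos.le
      positivity

lemma not_indep_anti (a c : E3) : ¬ LinearIndependent ℝ ![a, -a, c] := by
  intro h
  have := Fintype.linearIndependent_iff.mp h ![1, 1, 0] (by
    simp [Fin.sum_univ_three]) 0
  norm_num at this

lemma no_antipodes {P : Set E3} {k : ℕ} (hk : 3 ≤ k) (hPfin : P.Finite)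
    (hcard : P.ncard = k) (hgen : GenPos P) {a : E3} (haS : ‖a‖ = 1)
    (ha : a ∈ P) (hma : -a ∈ P) : False := by
  have hane : a ≠ -a := by
    intro h
    have h2 : (2:ℝ) • a = 0 := by rw [two_smul]; nth_rewrite 2 [h]; simp
    rcases smul_eq_zero.mp h2 with h' | h'
    · norm_num at h'
    · rw [h', norm_zero] at haS; norm_num at haS
  have hnsub : ¬ P ⊆ ({a, -a} : Set E3) := by
    intro hsub
    have h2 : ({a, -a} : Set E3).ncard ≤ 2 := by
      apply le_trans (Set.ncard_insert_le _ _)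
      simp
    have := Set.ncard_le_ncard hsub ((Set.finite_singleton _).insert _)
    omega
  obtain ⟨c, hcP, hc⟩ := Set.not_subset.mp hnsub
  simp only [Set.mem_insert_iff, Set.mem_singleton_iff, not_or] at hc
  exact not_indep_anti a c (hgen a ha (-a) hma c hcP hane (Ne.symm hc.1) (Ne.symm hc.2))

lemma mem_phat_decomp {P : Set E3} {x : E3} (hx : x ∈ phat P) :
    ∃ x₀ ∈ P, x = x₀ ∨ x = -x₀ := by
  rcases hx with h | ⟨y, hy, rfl⟩
  · exact ⟨x, h, Or.inl rfl⟩
  · exact ⟨y, hy, Or.inr rfl⟩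

lemma key_pair {P : Set E3} (hgen : GenPos P) {p a b : E3} (hp : p ∈ P)
    (ha : a ∈ phat P) (hb : b ∈ phat P)
    (hanp : a ∉ ({p, -p} : Set E3)) (hbnp : b ∉ ({p, -p} : Set E3))
    (hba : b ≠ a) (hbma : b ≠ -a) :
    (∀ s t : ℝ, s • a + t • b = 0 → s = 0 ∧ t = 0) ∧ (∀ s t : ℝ, p ≠ s • a + t • b) := by
  simp only [Set.mem_insert_iff, Set.mem_singleton_iff, not_or] at hanp hbnp
  obtain ⟨a₀, ha₀P, hA⟩ := mem_phat_decomp ha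
  obtain ⟨b₀, hb₀P, hB⟩ := mem_phat_decomp hb
  obtain ⟨ε, hε1, hεa⟩ : ∃ ε : ℝ, (ε = 1 ∨ ε = -1) ∧ a = ε • a₀ := by
    rcases hA with rfl | rfl
    exacts [⟨1, Or.inl rfl, by simp⟩, ⟨-1, Or.inr rfl, by simp⟩]
  obtain ⟨δ, hδ1, hδb⟩ : ∃ δ : ℝ, (δ = 1 ∨ δ = -1) ∧ b = δ • b₀ := by
    rcases hB with rfl | rfl
    exacts [⟨1, Or.inl rfl, by simp⟩, ⟨-1, Or.inr rfl, by simp⟩]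
  have hεne : ε ≠ 0 := by rcases hε1 with rfl | rfl <;> norm_num
  have hδne : δ ≠ 0 := by rcases hδ1 with rfl | rfl <;> norm_num
  have ha₀p : a₀ ≠ p := by
    rintro rfl
    rcases hε1 with rfl | rfl
    · exact hanp.1 (by rw [hεa, one_smul])
    · exact hanp.2 (by rw [hεa]; simp)
  have hb₀p : b₀ ≠ p := by
    rintro rfl
    rcases hδ1 with rfl | rfl
    · exact hbnp.1 (by rw [hδb, one_smul])
    · exact hbnp.2 (by rw [hδb]; simp)
  have hab₀ : a₀ ≠ b₀ := by
    rintro rfl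
    rcases hε1 with rfl | rfl <;> rcases hδ1 with rfl | rfl <;>
      simp only [one_smul, neg_smul] at hεa hδb
    · exact hba (hδb.trans hεa.symm)
    · exact hbma (by rw [hδb, hεa])
    · exact hbma (by rw [hδb, hεa, neg_neg])
    · exact hba (hδb.trans hεa.symm)
  have tri := hgen a₀ ha₀P b₀ hb₀P p hp hab₀ ha₀p hb₀p
  constructor
  · intro s t h
    rw [hεa, hδb, smul_smul, smul_smul] at h
    have hsum : ∑ i, (![s * ε, t * δ, 0] : Fin 3 → ℝ) i • ![a₀, b₀, p] i = 0 := by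
      simp only [Fin.sum_univ_three]
      simpa using h
    have h0 := Fintype.linearIndependent_iff.mp tri _ hsum 0
    have h1 := Fintype.linearIndependent_iff.mp tri _ hsum 1
    simp only [Matrix.cons_val_zero, Matrix.cons_val_one, Matrix.head_cons] at h0 h1
    exact ⟨by rcases mul_eq_zero.mp h0 with h | h; exact h; exact absurd h hεne,
           by rcases mul_eq_zero.mp h1 with h | h; exact h; exact absurd h hδne⟩
  · intro s t h
    rw [hεa, hδb, smul_smul, smul_smul] at h
    have hsum : ∑ i, (![s * ε, t * δ, -1] : Fin 3 → ℝ) i • ![a₀, b₀, p] i = 0 := by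
      simp only [Fin.sum_univ_three]
      simp only [Matrix.cons_val_zero, Matrix.cons_val_one, Matrix.head_cons,
        Matrix.cons_val_two, Matrix.tail_cons, neg_smul, one_smul]
      rw [← h]
      abel
    have h2 := Fintype.linearIndependent_iff.mp tri _ hsum 2
    have h2' : (![s * ε, t * δ, -1] : Fin 3 → ℝ) 2 = -1 := rfl
    rw [h2'] at h2
    norm_num at h2

lemma ncard_sprod {α β : Type*} (s : Set α) (t : Set β) :
    (s ×ˢ t).ncard = s.ncard * t.ncard := by
  rw [← Nat.card_coe_set_eq, ← Nat.card_coe_set_eq, ← Nat.card_coe_set_eq,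
    Nat.card_congr (Equiv.Set.prod s t), Nat.card_prod]

theorem count_edges_meeting_halfCircle
    (k : ℕ) (hk : 3 ≤ k) (P : Set E3) (hPS : P ⊆ unitSphere)
    (hPfin : P.Finite) (hcard : P.ncard = k) (hgen : GenPos P)
    (p : E3) (hp : p ∈ P) (v : E3) (hv : ‖v‖ = 1) (hpv : ⟪p, v⟫ = 0)
    (hQ : ((Submodule.span ℝ {p, v} : Set E3) ∩ unitSphere) ∩ phat P =
      ({p, -p} : Set E3)) :
    (Set.ncard {e : Sym2 E3 | ∃ a b, a ∈ phat P ∧ b ∈ phat P ∧ b ≠ a ∧ b ≠ -a ∧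
        a ∉ ({p, -p} : Set E3) ∧ b ∉ ({p, -p} : Set E3) ∧
        (arc a b ∩ halfCircle p v).Nonempty ∧ e = s(a, b)} : ℚ) =
      ((k : ℚ) - 1) * ((k : ℚ) - 2) / 2 := by
  have hpS : ‖p‖ = 1 := hPS hp
  obtain ⟨n, hn⟩ := exists_normal hpS hv hpv
  have hphatS : ∀ x ∈ phat P, ‖x‖ = 1 := by
    rintro x (h | ⟨y, hy, rfl⟩)
    · exact hPS h
    · rw [norm_neg]; exact hPS hy
  set W : Set E3 := phat P \ {p, -p} with hWdef
  have hfW : ∀ x ∈ W, ⟪n, x⟫ ≠ 0 := by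
    rintro x ⟨hx1, hx2⟩ h0
    apply hx2
    rw [← hQ]
    exact ⟨⟨(hn x).mp h0, hphatS x hx1⟩, hx1⟩
  have hnegphat : ∀ x ∈ phat P, -x ∈ phat P := by
    rintro x (h | ⟨y, hy, rfl⟩)
    · exact Or.inr ⟨x, h, rfl⟩
    · rw [neg_neg]; exact Or.inl hy
  have hnegW : ∀ x ∈ W, -x ∈ W := by
    rintro x ⟨h1, h2⟩
    refine ⟨hnegphat x h1, ?_⟩
    simp only [Set.mem_insert_iff, Set.mem_singleton_iff, not_or] at h2 ⊢
    constructor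
    · intro h; exact h2.2 (by rw [← h, neg_neg])
    · intro h; exact h2.1 (neg_injective h)
  set A : Set E3 := {x ∈ W | 0 < ⟪n, x⟫} with hAdef
  set B : Set E3 := {x ∈ W | ⟪n, x⟫ < 0} with hBdef
  have hphatfin : (phat P).Finite := hPfin.union (hPfin.image _)
  have hWfin : W.Finite := hphatfin.diff
  have hAfin : A.Finite := hWfin.subset (Set.sep_subset _ _)
  have hBfin : B.Finite := hWfin.subset (Set.sep_subset _ _)
  have hpne : p ≠ -p := by
    intro h
    have h2 : (2:ℝ) • p = 0 := by rw [two_smul]; nth_rewrite 2 [h]; simp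
    rcases smul_eq_zero.mp h2 with h' | h'
    · norm_num at h'
    · rw [h', norm_zero] at hpS; norm_num at hpS
  have hppsub : ({p, -p} : Set E3) ⊆ phat P := by
    rintro x (rfl | rfl)
    · exact Or.inl hp
    · exact Or.inr ⟨p, hp, rfl⟩
  have hdisjPm : Disjoint P ((fun x => -x) '' P) := by
    rw [Set.disjoint_left]
    rintro x hxP ⟨y, hyP, hxy⟩
    exact no_antipodes hk hPfin hcard hgen (hPS hyP) hyP (by rw [show -y = x from hxy]; exact hxP)
  have hphatcard : (phat P).ncard = 2 * k := by
    rw [phat, Set.ncard_union_eq hdisjPm hPfin (hPfin.image _),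
      Set.ncard_image_of_injective _ neg_injective, hcard]
    ring
  have hWcard : W.ncard = 2 * k - 2 := by
    rw [hWdef, Set.ncard_diff hppsub, hphatcard, Set.ncard_pair hpne]
  have hABdisj : Disjoint A B := by
    rw [Set.disjoint_left]
    rintro x ⟨_, h1⟩ ⟨_, h2⟩
    linarith
  have hWAB : W = A ∪ B := by
    ext x
    constructor
    · intro hx
      rcases lt_or_gt_of_ne (hfW x hx) with h | h
      · exact Or.inr ⟨hx, h⟩
      · exact Or.inl ⟨hx, h⟩
    · rintro (⟨h, _⟩ | ⟨h, _⟩) <;> exact h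
  have hBimg : B = (fun x => -x) '' A := by
    ext x
    constructor
    · rintro ⟨hxW, hxf⟩
      refine ⟨-x, ⟨hnegW x hxW, ?_⟩, by simp⟩
      rw [inner_neg_right]; linarith
    · rintro ⟨y, ⟨hyW, hyf⟩, rfl⟩
      refine ⟨hnegW y hyW, ?_⟩
      rw [inner_neg_right]; linarith
  have hcardAB : A.ncard = B.ncard := by
    rw [hBimg, Set.ncard_image_of_injective _ neg_injective]
  have hcardA : A.ncard = k - 1 := by
    have hu := Set.ncard_union_eq hABdisj hAfin hBfin
    rw [← hWAB, hWcard] at hu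
    omega
  -- the pair sets
  set wv : E3 × E3 → ℝ := fun q => ⟪v, |⟪n, q.2⟫| • q.1 + |⟪n, q.1⟫| • q.2⟫ with hwvdef
  set T : Set (E3 × E3) := {q | q.1 ∈ A ∧ q.2 ∈ B ∧ q.2 ≠ -q.1} with hTdef
  set Tp : Set (E3 × E3) := {q | q.1 ∈ A ∧ q.2 ∈ B ∧ q.2 ≠ -q.1 ∧ 0 < wv q} with hTpdef
  set Tm : Set (E3 × E3) := {q | q.1 ∈ A ∧ q.2 ∈ B ∧ q.2 ≠ -q.1 ∧ wv q < 0} with hTmdef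
  have hkeyT : ∀ a b : E3, a ∈ A → b ∈ B → b ≠ -a →
      (∀ s t : ℝ, s • a + t • b = 0 → s = 0 ∧ t = 0) ∧ (∀ s t : ℝ, p ≠ s • a + t • b) := by
    intro a b haA hbB hbna
    have hba : b ≠ a := by
      intro h; rw [h] at hbB; exact absurd haA.2 (by linarith [hbB.2])
    exact key_pair hgen hp haA.1.1 hbB.1.1 haA.1.2 hbB.1.2 hba hbna
  have hwvne : ∀ a b : E3, a ∈ A → b ∈ B → b ≠ -a → wv (a, b) ≠ 0 := by
    intro a b haA hbB hbna
    obtain ⟨hind, hpab⟩ := hkeyT a b haA hbB hbna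
    have hsign : ⟪n, a⟫ * ⟪n, b⟫ < 0 := mul_neg_of_pos_of_neg haA.2 hbB.2
    exact vw_ne_zero hpS hv hpv hn hind hpab _ _
      (fun ⟨h1, _⟩ => absurd (abs_eq_zero.mp h1) (ne_of_lt hbB.2)) (inner_n_w hsign)
  have hTfin : T.Finite := (hAfin.prod hBfin).subset (fun q hq => ⟨hq.1, hq.2.1⟩)
  have hTpfin : Tp.Finite := hTfin.subset (fun q hq => ⟨hq.1, hq.2.1, hq.2.2.1⟩)
  have hTmfin : Tm.Finite := hTfin.subset (fun q hq => ⟨hq.1, hq.2.1, hq.2.2.1⟩)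
  have hTsplit : T = Tp ∪ Tm := by
    ext ⟨a, b⟩
    constructor
    · rintro ⟨h1, h2, h3⟩
      rcases lt_or_gt_of_ne (hwvne a b h1 h2 h3) with h | h
      · exact Or.inr ⟨h1, h2, h3, h⟩
      · exact Or.inl ⟨h1, h2, h3, h⟩
    · rintro (⟨h1, h2, h3, _⟩ | ⟨h1, h2, h3, _⟩) <;> exact ⟨h1, h2, h3⟩
  have hTpm : Disjoint Tp Tm := by
    rw [Set.disjoint_left]
    rintro q ⟨_, _, _, h1⟩ ⟨_, _, _, h2⟩
    linarith
  have hDimg : T = (A ×ˢ B) \ ((fun x => (x, -x)) '' A) := by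
    ext ⟨a, b⟩
    simp only [hTdef, Set.mem_setOf_eq, Set.mem_diff, Set.mem_prod, Set.mem_image]
    constructor
    · rintro ⟨h1, h2, h3⟩
      exact ⟨⟨h1, h2⟩, fun ⟨x, hxA, hx⟩ => h3 (by
        obtain ⟨hx1, hx2⟩ := Prod.mk.injEq .. ▸ hx
        rw [← hx2, ← hx1])⟩
    · rintro ⟨⟨h1, h2⟩, h3⟩
      refine ⟨h1, h2, fun hb => h3 ⟨a, h1, ?_⟩⟩
      rw [hb]
  have hDsub : ((fun x => (x, -x)) '' A) ⊆ A ×ˢ B := by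
    rintro q ⟨x, hxA, rfl⟩
    refine ⟨hxA, hnegW x hxA.1, ?_⟩
    rw [inner_neg_right]; linarith [hxA.2]
  have hTcard : T.ncard = (k - 1) * (k - 1) - (k - 1) := by
    have hinj : Function.Injective (fun x : E3 => (x, -x)) := by
      intro x y h
      exact (Prod.mk.injEq .. ▸ h).1
    rw [hDimg, Set.ncard_diff hDsub (hAfin.image _), ncard_sprod, Set.ncard_image_of_injective _ hinj,
      hcardA, ← hcardAB, hcardA]
  have hTmimg : Tm = (fun q : E3 × E3 => (-q.2, -q.1)) '' Tp := by
    have hwvneg : ∀ q : E3 × E3, wv (-q.2, -q.1) = -wv q := by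
      rintro ⟨a, b⟩
      simp only [hwvdef]
      rw [inner_neg_right, inner_neg_right, abs_neg, abs_neg, smul_neg, smul_neg,
        ← neg_add, inner_neg_right, add_comm]
    ext ⟨a, b⟩
    constructor
    · rintro ⟨h1, h2, h3, h4⟩
      refine ⟨(-b, -a), ⟨⟨hnegW b h2.1, by rw [inner_neg_right]; linarith [h2.2]⟩,
        ⟨hnegW a h1.1, by rw [inner_neg_right]; linarith [h1.2]⟩,
        by rw [neg_neg]; exact fun h => h3 h.symm, ?_⟩, by simp⟩
      have hneg : wv (-b, -a) = -wv (a, b) := hwvneg (a, b)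
      rw [hneg]
      linarith
    · rintro ⟨⟨c, d⟩, ⟨h1, h2, h3, h4⟩, heq⟩
      injection heq with e1 e2
      subst e1; subst e2
      refine ⟨⟨hnegW d h2.1, by rw [inner_neg_right]; linarith [h2.2]⟩,
        ⟨hnegW c h1.1, by rw [inner_neg_right]; linarith [h1.2]⟩,
        by rw [neg_neg]; exact fun h => h3 h.symm, ?_⟩
      have hneg : wv (-d, -c) = -wv (c, d) := hwvneg (c, d)
      rw [hneg]
      linarith
  have hinj2 : Function.Injective (fun q : E3 × E3 => (-q.2, -q.1)) := by
    intro q r h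
    injection h with h1 h2
    exact Prod.ext (neg_injective h2) (neg_injective h1)
  have hTmcard : Tp.ncard = Tm.ncard := by
    rw [hTmimg, Set.ncard_image_of_injective _ hinj2]
  have h2T : 2 * Tp.ncard = (k - 1) * (k - 1) - (k - 1) := by
    have hu := Set.ncard_union_eq hTpm hTpfin hTmfin
    rw [← hTsplit, hTcard] at hu
    omega
  have himg : {e : Sym2 E3 | ∃ a b, a ∈ phat P ∧ b ∈ phat P ∧ b ≠ a ∧ b ≠ -a ∧
        a ∉ ({p, -p} : Set E3) ∧ b ∉ ({p, -p} : Set E3) ∧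
        (arc a b ∩ halfCircle p v).Nonempty ∧ e = s(a, b)} =
      (fun q : E3 × E3 => s(q.1, q.2)) '' Tp := by
    ext e
    simp only [Set.mem_setOf_eq, Set.mem_image]
    constructor
    · rintro ⟨a, b, haP, hbP, hba, hbma, hanp, hbnp, hne, rfl⟩
      have haW : a ∈ W := ⟨haP, hanp⟩
      have hbW : b ∈ W := ⟨hbP, hbnp⟩
      have hfa := hfW a haW
      have hfb := hfW b hbW
      obtain ⟨hind, hpab⟩ := key_pair hgen hp haP hbP hanp hbnp hba hbma
      obtain ⟨hsign, hvw⟩ := (arc_meets_iff hpS hv hpv hn hind hpab hfa hfb).mp hne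
      rcases lt_or_gt_of_ne hfa with hfa' | hfa'
      · have hfb' : 0 < ⟪n, b⟫ := by nlinarith [hsign, hfa']
        have hwvba : wv (b, a) = ⟪v, |⟪n, b⟫| • a + |⟪n, a⟫| • b⟫ := by
          show ⟪v, |⟪n, a⟫| • b + |⟪n, b⟫| • a⟫ = _
          rw [add_comm]
        refine ⟨(b, a), ⟨⟨hbW, hfb'⟩, ⟨haW, hfa'⟩,
          fun h => hbma (by rw [show a = -b from h, neg_neg]), by rw [hwvba]; exact hvw⟩, ?_⟩
        simp only
        rw [Sym2.eq_swap]
      · have hfb' : ⟪n, b⟫ < 0 := by nlinarith [hsign, hfa']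
        exact ⟨(a, b), ⟨⟨haW, hfa'⟩, ⟨hbW, hfb'⟩, hbma, hvw⟩, rfl⟩
    · rintro ⟨⟨a, b⟩, ⟨haA, hbB, hbna, hwv⟩, rfl⟩
      have hba : b ≠ a := by
        intro h
        rw [h] at hbB
        linarith [haA.2, hbB.2]
      obtain ⟨hind, hpab⟩ := hkeyT a b haA hbB hbna
      refine ⟨a, b, haA.1.1, hbB.1.1, hba, hbna, haA.1.2, hbB.1.2, ?_, rfl⟩
      exact (arc_meets_iff hpS hv hpv hn hind hpab (ne_of_gt haA.2) (ne_of_lt hbB.2)).mpr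
        ⟨mul_neg_of_pos_of_neg haA.2 hbB.2, hwv⟩
  have hinjOn : Set.InjOn (fun q : E3 × E3 => s(q.1, q.2)) Tp := by
    rintro ⟨a, b⟩ ha ⟨c, d⟩ hc h
    simp only at h
    rcases Sym2.eq_iff.mp h with ⟨rfl, rfl⟩ | ⟨rfl, rfl⟩
    · rfl
    · exfalso
      linarith [ha.1.2, hc.2.1.2]
  rw [himg, Set.ncard_image_of_injOn hinjOn]
  have hle : (k - 1) ≤ (k - 1) * (k - 1) := Nat.le_mul_of_pos_left _ (by omega)
  qify [hle, show 1 ≤ k by omega] at h2T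
  linear_combination h2T / 2

end
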